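/- For n = 2, the convex hull of X ∩ W₁₂ equals Y = {x ∈ ℝ₊² : p x₁ ≤ x₂ ≤ q x₁, x₁^{a₁} x₂^{a₂} ≥ ℓ, and d₂ x₁ − d₁ x₂ ≤ (u/λ)^{1/β}}. -/

import Mathlib

open Real

lemma chord_aux {s p q μ : ℝ} (hs0 : 0 < s) (hs1 : s < 1) (hp : 0 < p) (hpq : p < q)
    (hμ0 : 0 ≤ μ) (hμ1 : μ ≤ 1) :
    ((q ^ (1 - s) - p ^ (1 - s)) - (q ^ (-s) - p ^ (-s)) * (μ * p + (1 - μ) * q)) * p ^ s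
      ≤ (μ * p + (1 - μ) * q) ^ s * (q ^ (-s) * (q - p)) := by
  have hq : 0 < q := hp.trans hpq
  have h1 : p ^ (1 - s) = p * p ^ (-s) := by
    rw [show (1 : ℝ) - s = 1 + (-s) by ring, Real.rpow_add hp, Real.rpow_one]
  have h2 : q ^ (1 - s) = q * q ^ (-s) := by
    rw [show (1 : ℝ) - s = 1 + (-s) by ring, Real.rpow_add hq, Real.rpow_one]
  have h3 : p ^ (-s) * p ^ s = 1 := by rw [← Real.rpow_add hp]; simp
  have h4 : q ^ (-s) * q ^ s = 1 := by rw [← Real.rpow_add hq]; simp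
  have hconc : μ * p ^ s + (1 - μ) * q ^ s ≤ (μ * p + (1 - μ) * q) ^ s := by
    have := (Real.concaveOn_rpow hs0.le hs1.le).2 (Set.mem_Ici.2 hp.le)
      (Set.mem_Ici.2 hq.le) hμ0 (show (0:ℝ) ≤ 1 - μ by linarith) (show μ + (1 - μ) = 1 by ring)
    simpa using this
  calc ((q ^ (1 - s) - p ^ (1 - s)) - (q ^ (-s) - p ^ (-s)) * (μ * p + (1 - μ) * q)) * p ^ s
      = (μ * p ^ s + (1 - μ) * q ^ s) * (q ^ (-s) * (q - p)) := by
        rw [h1, h2]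
        linear_combination ((1 - μ) * (q - p)) * h3 - ((1 - μ) * (q - p)) * h4
    _ ≤ (μ * p + (1 - μ) * q) ^ s * (q ^ (-s) * (q - p)) := by
        apply mul_le_mul_of_nonneg_right hconc
        exact mul_nonneg (Real.rpow_nonneg hq.le _) (by linarith)

set_option maxHeartbeats 1600000 in
/-- For `n = 2`, `conv(X ∩ W₁₂) = Y`. -/
theorem convexHull_X_inter_W12 (a₁ a₂ ℓ u p q β d₁ d₂ lam : ℝ)
    (ha₁ : 0 < a₁) (ha₂ : 0 < a₂) (hβ : β = a₁ + a₂)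
    (hℓ : 0 < ℓ) (hℓu : ℓ < u) (hp : 0 < p) (hpq : p < q)
    (hd₁ : d₁ = q ^ (-(a₂ / β)) - p ^ (-(a₂ / β)))
    (hd₂ : d₂ = q ^ (a₁ / β) - p ^ (a₁ / β))
    (hlam : lam = p ^ a₂ / (d₂ - d₁ * p) ^ β) :
    convexHull ℝ
      {x : ℝ × ℝ | (0 ≤ x.1 ∧ 0 ≤ x.2) ∧
        (ℓ ≤ x.1 ^ a₁ * x.2 ^ a₂ ∧ x.1 ^ a₁ * x.2 ^ a₂ ≤ u) ∧
        (p * x.1 ≤ x.2 ∧ x.2 ≤ q * x.1)} =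
    {x : ℝ × ℝ | (0 ≤ x.1 ∧ 0 ≤ x.2) ∧
        (p * x.1 ≤ x.2 ∧ x.2 ≤ q * x.1) ∧
        ℓ ≤ x.1 ^ a₁ * x.2 ^ a₂ ∧
        d₂ * x.1 - d₁ * x.2 ≤ (u / lam) ^ (1 / β)} := by
  have hq : 0 < q := hp.trans hpq
  have hβ0 : 0 < β := by rw [hβ]; linarith
  set s : ℝ := a₂ / β with hs_def
  have hs0 : 0 < s := div_pos ha₂ hβ0
  have hs1 : s < 1 := by rw [hs_def, div_lt_one hβ0]; linarith
  have hr : a₁ / β = 1 - s := by rw [hs_def]; field_simp; linarith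
  have hsβ : s * β = a₂ := by rw [hs_def]; field_simp
  rw [hr] at hd₂
  have hu0 : 0 < u := hℓ.trans hℓu
  -- basic positivity facts
  have hd₁neg : d₁ < 0 := by
    rw [hd₁]
    have := Real.rpow_lt_rpow_of_neg hp hpq (show -(a₂/β) < 0 by rw [← hs_def]; linarith)
    linarith
  have hd₂pos : 0 < d₂ := by
    rw [hd₂]
    have := Real.rpow_lt_rpow hp.le hpq (show (0:ℝ) < 1 - s by linarith)
    linarith
  rw [show -(a₂ / β) = -s by rw [hs_def]] at hd₁
  have hDp : d₂ - d₁ * p = q ^ (-s) * (q - p) := by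
    have h1 : p ^ (1 - s) = p * p ^ (-s) := by
      rw [show (1 : ℝ) - s = 1 + (-s) by ring, Real.rpow_add hp, Real.rpow_one]
    have h2 : q ^ (1 - s) = q * q ^ (-s) := by
      rw [show (1 : ℝ) - s = 1 + (-s) by ring, Real.rpow_add hq, Real.rpow_one]
    rw [hd₁, hd₂, h1, h2]; ring
  have hDq : d₂ - d₁ * q = p ^ (-s) * (q - p) := by
    have h1 : p ^ (1 - s) = p * p ^ (-s) := by
      rw [show (1 : ℝ) - s = 1 + (-s) by ring, Real.rpow_add hp, Real.rpow_one]
    have h2 : q ^ (1 - s) = q * q ^ (-s) := by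
      rw [show (1 : ℝ) - s = 1 + (-s) by ring, Real.rpow_add hq, Real.rpow_one]
    rw [hd₁, hd₂, h1, h2]; ring
  have hDppos : 0 < d₂ - d₁ * p := by
    rw [hDp]; exact mul_pos (Real.rpow_pos_of_pos hq _) (by linarith)
  have hDqpos : 0 < d₂ - d₁ * q := by
    rw [hDq]; exact mul_pos (Real.rpow_pos_of_pos hp _) (by linarith)
  have hlam0 : 0 < lam := by
    rw [hlam]
    exact div_pos (Real.rpow_pos_of_pos hp _) (Real.rpow_pos_of_pos hDppos _)
  -- value of the RHS bound
  have hRHS : (u / lam) ^ (1 / β) = u ^ (1 / β) * (d₂ - d₁ * p) / p ^ s := by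
    have h0 : u / lam = u * (d₂ - d₁ * p) ^ β / p ^ a₂ := by
      rw [hlam]
      field_simp [(Real.rpow_pos_of_pos hp a₂).ne', (Real.rpow_pos_of_pos hDppos β).ne']
    rw [h0, Real.div_rpow (by positivity) (Real.rpow_nonneg hp.le _),
      Real.mul_rpow hu0.le (Real.rpow_nonneg hDppos.le _),
      ← Real.rpow_mul hDppos.le, ← Real.rpow_mul hp.le,
      mul_one_div, div_self hβ0.ne', Real.rpow_one, mul_one_div, ← hs_def]
  -- positivity of coordinates for points satisfying cone + lower bound
  have hpos : ∀ x : ℝ × ℝ, 0 ≤ x.1 → 0 ≤ x.2 → ℓ ≤ x.1 ^ a₁ * x.2 ^ a₂ →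
      p * x.1 ≤ x.2 → x.2 ≤ q * x.1 → 0 < x.1 ∧ 0 < x.2 := by
    intro x h1 h2 hf hc1 hc2
    rcases eq_or_lt_of_le h1 with h | h
    · exfalso
      have hx2 : x.2 = 0 := le_antisymm (by rw [← h] at hc2; linarith) h2
      rw [← h, hx2, Real.zero_rpow ha₁.ne'] at hf
      simp at hf; linarith
    · exact ⟨h, lt_of_lt_of_le (mul_pos hp h) hc1⟩
  -- key inequality : on the cone, d₂x₁ - d₁x₂ ≤ f(x)^(1/β) * (d₂-d₁p)/p^s
  have hkey : ∀ x : ℝ × ℝ, 0 < x.1 → 0 < x.2 → p * x.1 ≤ x.2 → x.2 ≤ q * x.1 →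
      (d₂ * x.1 - d₁ * x.2) * p ^ s ≤ (x.1 ^ a₁ * x.2 ^ a₂) ^ (1 / β) * (d₂ - d₁ * p) := by
    intro x hx1 hx2 hc1 hc2
    set t : ℝ := x.2 / x.1 with ht_def
    have hpt : p ≤ t := (le_div_iff₀ hx1).2 (by linarith)
    have htq : t ≤ q := (div_le_iff₀ hx1).2 (by linarith)
    set μ : ℝ := (q - t) / (q - p) with hμ_def
    have hμ0 : 0 ≤ μ := div_nonneg (by linarith) (by linarith)
    have hμ1 : μ ≤ 1 := (div_le_one (by linarith)).2 (by linarith)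
    have hqp : q - p ≠ 0 := sub_ne_zero.2 hpq.ne'
    have ht : μ * p + (1 - μ) * q = t := by
      rw [hμ_def]; field_simp; ring
    have hchord := chord_aux hs0 hs1 hp hpq hμ0 hμ1
    rw [ht, ← hd₁, ← hd₂, ← hDp] at hchord
    -- multiply by x.1
    have hxt : x.1 * t = x.2 := by
      rw [ht_def]; field_simp
    have h5 : (d₂ * x.1 - d₁ * x.2) * p ^ s ≤ (x.1 * t ^ s) * (d₂ - d₁ * p) := by
      have h6 := mul_le_mul_of_nonneg_left hchord hx1.le
      calc (d₂ * x.1 - d₁ * x.2) * p ^ s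
          = x.1 * ((d₂ - d₁ * t) * p ^ s) := by linear_combination (d₁ * p ^ s) * hxt
        _ ≤ x.1 * (t ^ s * (d₂ - d₁ * p)) := h6
        _ = (x.1 * t ^ s) * (d₂ - d₁ * p) := by ring
    have h6 : x.1 * t ^ s = (x.1 ^ a₁ * x.2 ^ a₂) ^ (1 / β) := by
      rw [Real.mul_rpow (Real.rpow_nonneg hx1.le _) (Real.rpow_nonneg hx2.le _),
        ← Real.rpow_mul hx1.le, ← Real.rpow_mul hx2.le, mul_one_div, mul_one_div,
        hr, ← hs_def, ht_def, Real.div_rpow hx2.le hx1.le,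
        Real.rpow_sub hx1, Real.rpow_one]
      field_simp [(Real.rpow_pos_of_pos hx1 s).ne']
    rw [← h6]; exact h5
  apply Set.Subset.antisymm
  · -- conv S ⊆ Y
    apply convexHull_min
    · -- S ⊆ Y
      rintro x ⟨⟨h1, h2⟩, ⟨hf1, hf2⟩, hc1, hc2⟩
      obtain ⟨hx1, hx2⟩ := hpos x h1 h2 hf1 hc1 hc2
      refine ⟨⟨h1, h2⟩, ⟨hc1, hc2⟩, hf1, ?_⟩
      have h5 := hkey x hx1 hx2 hc1 hc2
      have h7 : (x.1 ^ a₁ * x.2 ^ a₂) ^ (1/β) ≤ u ^ (1/β) :=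
        Real.rpow_le_rpow (by positivity) hf2 (by positivity)
      have h8 : (x.1 ^ a₁ * x.2 ^ a₂) ^ (1/β) * (d₂ - d₁ * p) ≤ u ^ (1/β) * (d₂ - d₁ * p) :=
        mul_le_mul_of_nonneg_right h7 hDppos.le
      rw [hRHS, le_div_iff₀ (Real.rpow_pos_of_pos hp s)]
      linarith
    · -- Y is convex
      rintro x hx y hy a b ha hb hab
      obtain ⟨⟨hx1n, hx2n⟩, ⟨hxc1, hxc2⟩, hxf, hxg⟩ := hx
      obtain ⟨⟨hy1n, hy2n⟩, ⟨hyc1, hyc2⟩, hyf, hyg⟩ := hy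
      obtain ⟨hx1, hx2⟩ := hpos x hx1n hx2n hxf hxc1 hxc2
      obtain ⟨hy1, hy2⟩ := hpos y hy1n hy2n hyf hyc1 hyc2
      have hz1 : (a • x + b • y).1 = a * x.1 + b * y.1 := by simp
      have hz2 : (a • x + b • y).2 = a * x.2 + b * y.2 := by simp
      have hz1p : 0 < a * x.1 + b * y.1 := by
        rcases (by by_contra h; push_neg at h; obtain ⟨h1, h2⟩ := h; linarith :
          0 < a ∨ 0 < b) with h | h
        · have h3 := mul_pos h hx1
          have : 0 ≤ b * y.1 := mul_nonneg hb hy1.le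
          linarith
        · have h3 := mul_pos h hy1
          have : 0 ≤ a * x.1 := mul_nonneg ha hx1.le
          linarith
      have hz2p : 0 < a * x.2 + b * y.2 := by
        rcases (by by_contra h; push_neg at h; obtain ⟨h1, h2⟩ := h; linarith :
          0 < a ∨ 0 < b) with h | h
        · have h3 := mul_pos h hx2
          have : 0 ≤ b * y.2 := mul_nonneg hb hy2.le
          linarith
        · have h3 := mul_pos h hy2
          have : 0 ≤ a * x.2 := mul_nonneg ha hx2.le
          linarith
      refine ⟨⟨by rw [hz1]; linarith, by rw [hz2]; linarith⟩, ⟨?_, ?_⟩, ?_, ?_⟩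
      · rw [hz1, hz2]
        have g1 := mul_le_mul_of_nonneg_left hxc1 ha
        have g2 := mul_le_mul_of_nonneg_left hyc1 hb
        linarith [g1, g2]
      · rw [hz1, hz2]
        have g1 := mul_le_mul_of_nonneg_left hxc2 ha
        have g2 := mul_le_mul_of_nonneg_left hyc2 hb
        linarith [g1, g2]
      · -- AM-GM : ℓ ≤ f(z)
        rw [hz1, hz2]
        have g1 : x.1 ^ a * y.1 ^ b ≤ a * x.1 + b * y.1 :=
          Real.geom_mean_le_arith_mean2_weighted ha hb hx1.le hy1.le hab
        have g2 : x.2 ^ a * y.2 ^ b ≤ a * x.2 + b * y.2 :=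
          Real.geom_mean_le_arith_mean2_weighted ha hb hx2.le hy2.le hab
        have e1 : (x.1 ^ a₁ * x.2 ^ a₂) ^ a * (y.1 ^ a₁ * y.2 ^ a₂) ^ b
            = (x.1 ^ a * y.1 ^ b) ^ a₁ * (x.2 ^ a * y.2 ^ b) ^ a₂ := by
          rw [Real.mul_rpow (Real.rpow_nonneg hx1.le _) (Real.rpow_nonneg hx2.le _),
            Real.mul_rpow (Real.rpow_nonneg hy1.le _) (Real.rpow_nonneg hy2.le _),
            Real.mul_rpow (Real.rpow_nonneg hx1.le _) (Real.rpow_nonneg hy1.le _),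
            Real.mul_rpow (Real.rpow_nonneg hx2.le _) (Real.rpow_nonneg hy2.le _),
            ← Real.rpow_mul hx1.le, ← Real.rpow_mul hx2.le,
            ← Real.rpow_mul hy1.le, ← Real.rpow_mul hy2.le,
            ← Real.rpow_mul hx1.le, ← Real.rpow_mul hx2.le,
            ← Real.rpow_mul hy1.le, ← Real.rpow_mul hy2.le]
          rw [mul_comm a₁ a, mul_comm a₂ a, mul_comm a₁ b, mul_comm a₂ b]
          ring
        have e2 : ℓ = ℓ ^ a * ℓ ^ b := by
          rw [← Real.rpow_add hℓ, hab, Real.rpow_one]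
        have e3 : ℓ ^ a * ℓ ^ b ≤ (x.1 ^ a₁ * x.2 ^ a₂) ^ a * (y.1 ^ a₁ * y.2 ^ a₂) ^ b := by
          apply mul_le_mul (Real.rpow_le_rpow hℓ.le hxf ha) (Real.rpow_le_rpow hℓ.le hyf hb)
            (Real.rpow_nonneg hℓ.le _) (Real.rpow_nonneg (by positivity) _)
        have e4 : (x.1 ^ a * y.1 ^ b) ^ a₁ * (x.2 ^ a * y.2 ^ b) ^ a₂
            ≤ (a * x.1 + b * y.1) ^ a₁ * (a * x.2 + b * y.2) ^ a₂ := by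
          apply mul_le_mul (Real.rpow_le_rpow (by positivity) g1 ha₁.le)
            (Real.rpow_le_rpow (by positivity) g2 ha₂.le)
            (Real.rpow_nonneg (by positivity) _) (Real.rpow_nonneg (by positivity) _)
        calc ℓ = ℓ ^ a * ℓ ^ b := e2
          _ ≤ (x.1 ^ a₁ * x.2 ^ a₂) ^ a * (y.1 ^ a₁ * y.2 ^ a₂) ^ b := e3
          _ = (x.1 ^ a * y.1 ^ b) ^ a₁ * (x.2 ^ a * y.2 ^ b) ^ a₂ := e1
          _ ≤ _ := e4
      · rw [hz1, hz2]
        have g1 := mul_le_mul_of_nonneg_left hxg ha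
        have g2 := mul_le_mul_of_nonneg_left hyg hb
        have g3 : (a + b) * ((u / lam) ^ (1 / β)) = (u / lam) ^ (1 / β) := by
          rw [hab, one_mul]
        linarith [g1, g2, g3]
  · -- Y ⊆ conv S
    intro x hx
    obtain ⟨⟨hx1n, hx2n⟩, ⟨hc1, hc2⟩, hℓf, hgu⟩ := hx
    obtain ⟨hx1, hx2⟩ := hpos x hx1n hx2n hℓf hc1 hc2
    by_cases hfu : x.1 ^ a₁ * x.2 ^ a₂ ≤ u
    · exact subset_convexHull ℝ _ ⟨⟨hx1n, hx2n⟩, ⟨hℓf, hfu⟩, hc1, hc2⟩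
    push_neg at hfu
    set c : ℝ := d₂ * x.1 - d₁ * x.2 with hc_def
    have hc : 0 < c := by
      rw [hc_def]
      have k1 := mul_pos hd₂pos hx1
      have k2 := mul_neg_of_neg_of_pos hd₁neg hx2
      linarith
    set P₂ : ℝ := p * c / (d₂ - d₁ * p) with hP2_def
    set Q₂ : ℝ := q * c / (d₂ - d₁ * q) with hQ2_def
    have hP2pos : 0 < P₂ := div_pos (mul_pos hp hc) hDppos
    set F : ℝ → ℝ := fun y => ((c + d₁ * y) / d₂) ^ a₁ * y ^ a₂ with hF_def
    have hFcont : Continuous F := by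
      have h1 : Continuous fun y : ℝ => (c + d₁ * y) / d₂ := by fun_prop
      exact (h1.rpow_const fun z => Or.inr ha₁.le).mul
        (continuous_id.rpow_const fun z => Or.inr ha₂.le)
    have hconeF : ∀ y, P₂ ≤ y → y ≤ Q₂ →
        p * ((c + d₁ * y) / d₂) ≤ y ∧ y ≤ q * ((c + d₁ * y) / d₂) := by
      intro y hy1 hy2
      have h1 : p * c ≤ y * (d₂ - d₁ * p) := (div_le_iff₀ hDppos).1 hy1
      have h2 : y * (d₂ - d₁ * q) ≤ q * c := (le_div_iff₀ hDqpos).1 hy2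
      constructor
      · rw [mul_div_assoc', div_le_iff₀ hd₂pos]; linarith [h1]
      · rw [mul_div_assoc', le_div_iff₀ hd₂pos]; linarith [h2]
    have hx2P : P₂ ≤ x.2 := by
      rw [hP2_def, div_le_iff₀ hDppos, hc_def]
      have k := mul_le_mul_of_nonneg_left hc1 hd₂pos.le
      linarith [k]
    have hx2Q : x.2 ≤ Q₂ := by
      rw [hQ2_def, le_div_iff₀ hDqpos, hc_def]
      have k := mul_le_mul_of_nonneg_left hc2 hd₂pos.le
      linarith [k]
    -- F values at the endpoints
    have hFP : F P₂ = lam * c ^ β := by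
      have e1 : (c + d₁ * P₂) / d₂ = c / (d₂ - d₁ * p) := by
        rw [hP2_def]; field_simp [hDppos.ne', hd₂pos.ne']; ring
      have e2 : P₂ = p * (c / (d₂ - d₁ * p)) := by rw [hP2_def]; ring
      rw [hF_def]
      show ((c + d₁ * P₂) / d₂) ^ a₁ * P₂ ^ a₂ = lam * c ^ β
      rw [e1, e2]
      have he : 0 < c / (d₂ - d₁ * p) := div_pos hc hDppos
      rw [Real.mul_rpow hp.le he.le, hlam, hβ, Real.div_rpow hc.le hDppos.le,
        Real.div_rpow hc.le hDppos.le, Real.rpow_add hc, Real.rpow_add hDppos]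
      field_simp [(Real.rpow_pos_of_pos hDppos a₁).ne',
        (Real.rpow_pos_of_pos hDppos a₂).ne']
    have hFQ : F Q₂ = lam * c ^ β := by
      have e1 : (c + d₁ * Q₂) / d₂ = c / (d₂ - d₁ * q) := by
        rw [hQ2_def]; field_simp [hDqpos.ne', hd₂pos.ne']; ring
      have e2 : Q₂ = q * (c / (d₂ - d₁ * q)) := by rw [hQ2_def]; ring
      rw [hF_def]
      show ((c + d₁ * Q₂) / d₂) ^ a₁ * Q₂ ^ a₂ = lam * c ^ β
      rw [e1, e2]
      have he : 0 < c / (d₂ - d₁ * q) := div_pos hc hDqpos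
      have hkey2 : q ^ a₂ * (d₂ - d₁ * p) ^ β = p ^ a₂ * (d₂ - d₁ * q) ^ β := by
        rw [hDp, hDq, Real.mul_rpow (Real.rpow_nonneg hq.le _) (by linarith),
          Real.mul_rpow (Real.rpow_nonneg hp.le _) (by linarith),
          ← Real.rpow_mul hq.le, ← Real.rpow_mul hp.le,
          show -s * β = -a₂ by rw [← hsβ]; ring]
        have f1 : q ^ a₂ * q ^ (-a₂) = 1 := by rw [← Real.rpow_add hq]; simp
        have f2 : p ^ a₂ * p ^ (-a₂) = 1 := by rw [← Real.rpow_add hp]; simp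
        linear_combination ((q - p) ^ β) * f1 - ((q - p) ^ β) * f2
      rw [hβ, Real.rpow_add hDppos, Real.rpow_add hDqpos] at hkey2
      rw [Real.mul_rpow hq.le he.le, hlam, hβ, Real.div_rpow hc.le hDqpos.le,
        Real.div_rpow hc.le hDqpos.le, Real.rpow_add hc, Real.rpow_add hDppos]
      have hne1 : ((d₂ - d₁ * p) ^ a₁) ≠ 0 := (Real.rpow_pos_of_pos hDppos a₁).ne'
      have hne2 : ((d₂ - d₁ * p) ^ a₂) ≠ 0 := (Real.rpow_pos_of_pos hDppos a₂).ne'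
      have hne3 : ((d₂ - d₁ * q) ^ a₁) ≠ 0 := (Real.rpow_pos_of_pos hDqpos a₁).ne'
      have hne4 : ((d₂ - d₁ * q) ^ a₂) ≠ 0 := (Real.rpow_pos_of_pos hDqpos a₂).ne'
      field_simp
      linear_combination hkey2
    have hFx : F x.2 = x.1 ^ a₁ * x.2 ^ a₂ := by
      have e1 : (c + d₁ * x.2) / d₂ = x.1 := by
        rw [hc_def]; field_simp; ring
      rw [hF_def]
      show ((c + d₁ * x.2) / d₂) ^ a₁ * x.2 ^ a₂ = x.1 ^ a₁ * x.2 ^ a₂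
      rw [e1]
    have hlamc : lam * c ^ β ≤ u := by
      have h2 := Real.rpow_le_rpow hc.le hgu hβ0.le
      rw [← Real.rpow_mul (div_nonneg hu0.le hlam0.le), one_div,
        inv_mul_cancel₀ hβ0.ne', Real.rpow_one] at h2
      calc lam * c ^ β ≤ lam * (u / lam) := mul_le_mul_of_nonneg_left h2 hlam0.le
        _ = u := by field_simp
    -- IVT on both sides
    obtain ⟨y₁, ⟨hy₁l, hy₁r⟩, hFy₁⟩ :
        ∃ y₁ ∈ Set.Icc P₂ x.2, F y₁ = u := by
      have h := intermediate_value_Icc hx2P hFcont.continuousOn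
      exact h ⟨by rw [hFP]; exact hlamc, by rw [hFx]; exact hfu.le⟩
    obtain ⟨y₂, ⟨hy₂l, hy₂r⟩, hFy₂⟩ :
        ∃ y₂ ∈ Set.Icc x.2 Q₂, F y₂ = u := by
      have h := intermediate_value_Icc' hx2Q hFcont.continuousOn
      exact h ⟨by rw [hFQ]; exact hlamc, by rw [hFx]; exact hfu.le⟩
    have hy₁x : y₁ < x.2 := by
      rcases eq_or_lt_of_le hy₁r with h | h
      · exfalso; rw [h, hFx] at hFy₁; linarith
      · exact h
    have hy₁₂ : y₁ < y₂ := hy₁x.trans_le hy₂l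
    set θ : ℝ := (y₂ - x.2) / (y₂ - y₁) with hθ_def
    have hθ0 : 0 ≤ θ := div_nonneg (by linarith) (by linarith)
    have hθ1 : θ ≤ 1 := (div_le_one (by linarith)).2 (by linarith)
    set A : ℝ × ℝ := ((c + d₁ * y₁) / d₂, y₁) with hA_def
    set B : ℝ × ℝ := ((c + d₁ * y₂) / d₂, y₂) with hB_def
    have hy₁pos : 0 < y₁ := lt_of_lt_of_le hP2pos hy₁l
    have hy₂pos : 0 < y₂ := hy₁pos.trans hy₁₂
    have hconeA := hconeF y₁ hy₁l (hy₁r.trans hx2Q)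
    have hconeB := hconeF y₂ (hx2P.trans hy₂l) hy₂r
    have hA1pos : 0 < (c + d₁ * y₁) / d₂ := by
      by_contra h
      push_neg at h
      have := mul_nonpos_of_nonneg_of_nonpos hq.le h
      linarith [hconeA.2]
    have hB1pos : 0 < (c + d₁ * y₂) / d₂ := by
      by_contra h
      push_neg at h
      have := mul_nonpos_of_nonneg_of_nonpos hq.le h
      linarith [hconeB.2]
    have hAmem : A ∈ {x : ℝ × ℝ | (0 ≤ x.1 ∧ 0 ≤ x.2) ∧
        (ℓ ≤ x.1 ^ a₁ * x.2 ^ a₂ ∧ x.1 ^ a₁ * x.2 ^ a₂ ≤ u) ∧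
        (p * x.1 ≤ x.2 ∧ x.2 ≤ q * x.1)} := by
      refine ⟨⟨hA1pos.le, hy₁pos.le⟩, ⟨?_, ?_⟩, hconeA.1, hconeA.2⟩
      · show ℓ ≤ ((c + d₁ * y₁) / d₂) ^ a₁ * y₁ ^ a₂
        have : ((c + d₁ * y₁) / d₂) ^ a₁ * y₁ ^ a₂ = F y₁ := rfl
        rw [this, hFy₁]; linarith
      · show ((c + d₁ * y₁) / d₂) ^ a₁ * y₁ ^ a₂ ≤ u
        have : ((c + d₁ * y₁) / d₂) ^ a₁ * y₁ ^ a₂ = F y₁ := rfl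
        rw [this, hFy₁]
    have hBmem : B ∈ {x : ℝ × ℝ | (0 ≤ x.1 ∧ 0 ≤ x.2) ∧
        (ℓ ≤ x.1 ^ a₁ * x.2 ^ a₂ ∧ x.1 ^ a₁ * x.2 ^ a₂ ≤ u) ∧
        (p * x.1 ≤ x.2 ∧ x.2 ≤ q * x.1)} := by
      refine ⟨⟨hB1pos.le, hy₂pos.le⟩, ⟨?_, ?_⟩, hconeB.1, hconeB.2⟩
      · show ℓ ≤ ((c + d₁ * y₂) / d₂) ^ a₁ * y₂ ^ a₂
        have : ((c + d₁ * y₂) / d₂) ^ a₁ * y₂ ^ a₂ = F y₂ := rfl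
        rw [this, hFy₂]; linarith
      · show ((c + d₁ * y₂) / d₂) ^ a₁ * y₂ ^ a₂ ≤ u
        have : ((c + d₁ * y₂) / d₂) ^ a₁ * y₂ ^ a₂ = F y₂ := rfl
        rw [this, hFy₂]
    have hxeq : θ • A + (1 - θ) • B = x := by
      have hne : y₂ - y₁ ≠ 0 := sub_ne_zero.2 hy₁₂.ne'
      have hsnd : θ * y₁ + (1 - θ) * y₂ = x.2 := by
        rw [hθ_def]; field_simp [hne]; ring
      have hfst : θ * ((c + d₁ * y₁) / d₂) + (1 - θ) * ((c + d₁ * y₂) / d₂) = x.1 := by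
        have h1 : θ * ((c + d₁ * y₁) / d₂) + (1 - θ) * ((c + d₁ * y₂) / d₂)
            = (c + d₁ * (θ * y₁ + (1 - θ) * y₂)) / d₂ := by
          field_simp [hd₂pos.ne']; ring
        rw [h1, hsnd, hc_def]
        field_simp [hd₂pos.ne']; ring
      have : θ • A + (1 - θ) • B
          = (θ * ((c + d₁ * y₁) / d₂) + (1 - θ) * ((c + d₁ * y₂) / d₂),
             θ * y₁ + (1 - θ) * y₂) := by
        rw [hA_def, hB_def]; simp [Prod.ext_iff]
      rw [this, hfst, hsnd]
    have hmix := (convex_convexHull ℝ _) (subset_convexHull ℝ _ hAmem)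
      (subset_convexHull ℝ _ hBmem) hθ0 (by linarith : (0:ℝ) ≤ 1 - θ)
      (by ring : θ + (1 - θ) = 1)
    exact hxeq ▸ hmix
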